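/- Lemma 5.1 (fully discrete necessity): Let D ⊆ ℂ be open with D + 1 = D. For each ν ∈ ℤ let τ(·,ν) : D → ℂ be holomorphic, and let η(ν) ∈ D satisfy τ(η(ν),ν) = 0, ∂_xτ(η(ν),ν) ≠ 0, τ(η(ν)+1,ν−1)·τ(η(ν)−1,ν−1) ≠ 0, and also τ(η(ν)+1,ν+1), τ(η(ν)−1,ν+1), τ(η(ν)+2,ν), τ(η(ν)−2,ν) all nonzero. Set u(x,ν) = τ(x,ν+1)·τ(x,ν−1)/[τ(x−1,ν)·τ(x+1,ν)]. Suppose that for each ν there is a function ψ(·,ν), meromorphic on D, holomorphic except for a simple pole with nonzero residue at x = η(ν), in particular holomorphic at η(ν+1)−1 and η(ν+1)+1, which satisfies ψ(x−1,ν) = ψ(x+1,ν) + u(x,ν)·ψ(x,ν−1) wherever all terms are defined. Then for every ν, writing η = η(ν), one has τ(η+1,ν+1)·τ(η−2,ν)·τ(η+1,ν−1) + τ(η−1,ν+1)·τ(η+2,ν)·τ(η−1,ν−1) = 0. -/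

import Mathlib

open Complex Filter

noncomputable section

open Topology

private lemma tendsto_shift' (a c : ℂ) :
    Filter.Tendsto (fun x : ℂ => x + c) (𝓝[≠] a) (𝓝[≠] (a + c)) := by
  rw [tendsto_nhdsWithin_iff]
  constructor
  · exact ((continuous_id.add continuous_const).tendsto a).mono_left nhdsWithin_le_nhds
  · filter_upwards [eventually_mem_nhdsWithin] with x hx
    simp only [Set.mem_compl_iff, Set.mem_singleton_iff] at hx ⊢
    exact fun h => hx (by linear_combination h)

/-- Lemma 5.1: fully discrete necessity. -/
theorem lemma51_necessity (D : Set ℂ) (hD : IsOpen D)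
    (hDshift : ∀ x : ℂ, x ∈ D ↔ x + 1 ∈ D)
    (τ : ℂ → ℤ → ℂ)
    (hτx : ∀ ν : ℤ, DifferentiableOn ℂ (fun x => τ x ν) D)
    (η : ℤ → ℂ) (hηD : ∀ ν, η ν ∈ D)
    (hτη : ∀ ν, τ (η ν) ν = 0)
    (hsimple : ∀ ν, deriv (fun x => τ x ν) (η ν) ≠ 0)
    (hnz1 : ∀ ν, τ (η ν + 1) (ν - 1) * τ (η ν - 1) (ν - 1) ≠ 0)
    (hnz2 : ∀ ν, τ (η ν + 1) (ν + 1) ≠ 0)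
    (hnz3 : ∀ ν, τ (η ν - 1) (ν + 1) ≠ 0)
    (hnz4 : ∀ ν, τ (η ν + 2) ν ≠ 0)
    (hnz5 : ∀ ν, τ (η ν - 2) ν ≠ 0)
    (ψ : ℂ → ℤ → ℂ) (α : ℤ → ℂ)
    (hα : ∀ ν, α ν ≠ 0)
    -- ψ(·,ν) is holomorphic on D away from its unique (simple) pole η(ν)
    (hψreg : ∀ ν, ∀ x ∈ D, x ≠ η ν → AnalyticAt ℂ (fun y => ψ y ν) x)
    -- simple pole at η(ν) with residue α(ν)
    (hψpole : ∀ ν, ∃ ρ : ℂ → ℂ, AnalyticAt ℂ ρ (η ν) ∧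
      ∀ᶠ x in nhdsWithin (η ν) {η ν}ᶜ, ψ x ν = α ν / (x - η ν) + ρ x)
    -- the equation ψ(x−1,ν) = ψ(x+1,ν) + u(x,ν)ψ(x,ν−1) wherever all terms are defined
    (heq : ∀ ν : ℤ, ∀ x ∈ D,
      τ (x - 1) ν ≠ 0 → τ (x + 1) ν ≠ 0 →
      x - 1 ≠ η ν → x + 1 ≠ η ν → x ≠ η (ν - 1) →
      ψ (x - 1) ν = ψ (x + 1) ν +
        (τ x (ν + 1) * τ x (ν - 1) / (τ (x - 1) ν * τ (x + 1) ν)) * ψ x (ν - 1)) :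
    ∀ ν : ℤ,
      τ (η ν + 1) (ν + 1) * τ (η ν - 2) ν * τ (η ν + 1) (ν - 1) +
        τ (η ν - 1) (ν + 1) * τ (η ν + 2) ν * τ (η ν - 1) (ν - 1) = 0 := by
  intro ν
  -- basic memberships
  have hmemp : ∀ x : ℂ, x ∈ D → x + 1 ∈ D := fun x hx => (hDshift x).1 hx
  have hmemm : ∀ x : ℂ, x ∈ D → x - 1 ∈ D := fun x hx => (hDshift (x - 1)).2 (by simpa using hx)
  have hD0 : η ν ∈ D := hηD ν
  have hDp1 : η ν + 1 ∈ D := hmemp _ hD0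
  have hDp2 : η ν + 2 ∈ D := by
    simpa [show η ν + 1 + 1 = η ν + 2 by ring] using hmemp _ hDp1
  have hDm1 : η ν - 1 ∈ D := hmemm _ hD0
  have hDm2 : η ν - 2 ∈ D := by
    simpa [show η ν - 1 - 1 = η ν - 2 by ring] using hmemm _ hDm1
  -- nonvanishing pieces
  have hT3 : τ (η ν + 1) (ν - 1) ≠ 0 := left_ne_zero_of_mul (hnz1 ν)
  have hS3 : τ (η ν - 1) (ν - 1) ≠ 0 := right_ne_zero_of_mul (hnz1 ν)
  have hjp : η ν + 1 ≠ η (ν - 1) := fun h => hT3 (by rw [h]; exact hτη (ν - 1))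
  have hjm : η ν - 1 ≠ η (ν - 1) := fun h => hS3 (by rw [h]; exact hτη (ν - 1))
  have hne_p2 : η ν + 2 ≠ η ν := by intro h; have : (2 : ℂ) = 0 := by linear_combination h
                                    norm_num at this
  have hne_m2 : η ν - 2 ≠ η ν := by intro h; have : (2 : ℂ) = 0 := by linear_combination -h
                                    norm_num at this
  have hne_m2' : η ν - 2 ≠ η ν - 1 := by
    intro h; have : (1 : ℂ) = 0 := by linear_combination -h
    norm_num at this
  -- continuity of τ
  have hcont : ∀ (μ : ℤ) (p : ℂ), p ∈ D → ContinuousAt (fun x => τ x μ) p :=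
    fun μ p hp => ((hτx μ).differentiableAt (hD.mem_nhds hp)).continuousAt
  -- slope limits
  have hder := ((hτx ν).differentiableAt (hD.mem_nhds hD0)).hasDerivAt
  have hd0 : deriv (fun x => τ x ν) (η ν) ≠ 0 := hsimple ν
  have hslope : Tendsto (fun y => τ y ν / (y - η ν)) (𝓝[≠] η ν)
      (𝓝 (deriv (fun x => τ x ν) (η ν))) := by
    rw [hasDerivAt_iff_tendsto_slope] at hder
    refine hder.congr fun y => ?_
    rw [slope_def_field, hτη ν, sub_zero]
  have hinv : Tendsto (fun y => (y - η ν) / τ y ν) (𝓝[≠] η ν)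
      (𝓝 (deriv (fun x => τ x ν) (η ν))⁻¹) :=
    (hslope.inv₀ hd0).congr fun y => inv_div _ _
  have hτne : ∀ᶠ y in 𝓝[≠] η ν, τ y ν ≠ 0 := by
    filter_upwards [hslope.eventually_ne hd0] with y h1 h0
    exact h1 (by simp [h0])
  -- shift maps
  have tmap_m : Tendsto (fun x : ℂ => x - 1) (𝓝[≠] (η ν + 1)) (𝓝[≠] (η ν)) := by
    have := tendsto_shift' (η ν + 1) (-1)
    simpa [sub_eq_add_neg] using this
  have tmap_p : Tendsto (fun x : ℂ => x + 1) (𝓝[≠] (η ν - 1)) (𝓝[≠] (η ν)) := by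
    have := tendsto_shift' (η ν - 1) 1
    simpa using this
  have tpp : Tendsto (fun x : ℂ => x + 1) (𝓝[≠] (η ν + 1)) (𝓝 (η ν + 2)) := by
    have : Tendsto (fun x : ℂ => x + 1) (𝓝 (η ν + 1)) (𝓝 (η ν + 1 + 1)) :=
      (continuous_id.add continuous_const).tendsto _
    simpa [show η ν + 1 + 1 = η ν + 2 by ring] using this.mono_left nhdsWithin_le_nhds
  have tmm : Tendsto (fun x : ℂ => x - 1) (𝓝[≠] (η ν - 1)) (𝓝 (η ν - 2)) := by
    have : Tendsto (fun x : ℂ => x - 1) (𝓝 (η ν - 1)) (𝓝 (η ν - 1 - 1)) :=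
      (continuous_id.sub continuous_const).tendsto _
    simpa [show η ν - 1 - 1 = η ν - 2 by ring] using this.mono_left nhdsWithin_le_nhds
  have tm3 : Tendsto (fun x : ℂ => x - 1) (𝓝[≠] (η ν)) (𝓝 (η ν - 1)) :=
    ((continuous_id.sub continuous_const).tendsto _).mono_left nhdsWithin_le_nhds
  have tp3 : Tendsto (fun x : ℂ => x + 1) (𝓝[≠] (η ν)) (𝓝 (η ν + 1)) :=
    ((continuous_id.add continuous_const).tendsto _).mono_left nhdsWithin_le_nhds
  obtain ⟨ρ, hρa, hρe⟩ := hψpole ν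
  -- Part 1: residue matching at η ν + 1
  have hxne1 : ∀ᶠ x in 𝓝[≠] (η ν + 1), x ≠ η ν + 1 :=
    eventually_mem_nhdsWithin.mono fun x hx => by simpa using hx
  have hEq1 : ∀ᶠ x in 𝓝[≠] (η ν + 1),
      ψ (x - 1) ν = ψ (x + 1) ν +
        (τ x (ν + 1) * τ x (ν - 1) / (τ (x - 1) ν * τ (x + 1) ν)) * ψ x (ν - 1) := by
    have e1 : ∀ᶠ x in 𝓝[≠] (η ν + 1), x ∈ D :=
      (hD.eventually_mem hDp1).filter_mono nhdsWithin_le_nhds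
    have e2 : ∀ᶠ x in 𝓝[≠] (η ν + 1), τ (x - 1) ν ≠ 0 := tmap_m.eventually hτne
    have e3 : ∀ᶠ x in 𝓝[≠] (η ν + 1), τ (x + 1) ν ≠ 0 :=
      tpp.eventually ((hcont ν _ hDp2).eventually_ne (hnz4 ν))
    have e4 : ∀ᶠ x in 𝓝[≠] (η ν + 1), x - 1 ≠ η ν :=
      tmap_m.eventually (eventually_mem_nhdsWithin.mono fun y hy => by simpa using hy)
    have e5 : ∀ᶠ x in 𝓝[≠] (η ν + 1), x + 1 ≠ η ν :=
      tpp.eventually (eventually_ne_nhds hne_p2)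
    have e6 : ∀ᶠ x in 𝓝[≠] (η ν + 1), x ≠ η (ν - 1) :=
      (eventually_ne_nhds hjp).filter_mono nhdsWithin_le_nhds
    filter_upwards [e1, e2, e3, e4, e5, e6] with x h1 h2 h3 h4 h5 h6
    exact heq ν x h1 h2 h3 h4 h5 h6
  have hzero_p : Tendsto (fun x : ℂ => x - (η ν + 1)) (𝓝[≠] (η ν + 1)) (𝓝 0) := by
    have : Tendsto (fun x : ℂ => x - (η ν + 1)) (𝓝 (η ν + 1)) (𝓝 (η ν + 1 - (η ν + 1))) :=
      (continuous_id.sub continuous_const).tendsto _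
    simpa using this.mono_left nhdsWithin_le_nhds
  have hA : Tendsto (fun x => (x - (η ν + 1)) * ψ (x - 1) ν) (𝓝[≠] (η ν + 1)) (𝓝 (α ν)) := by
    have hE : (fun x : ℂ => α ν + (x - (η ν + 1)) * ρ (x - 1)) =ᶠ[𝓝[≠] (η ν + 1)]
        (fun x => (x - (η ν + 1)) * ψ (x - 1) ν) := by
      filter_upwards [tmap_m.eventually hρe, hxne1] with x hx hne
      rw [hx]
      have h0 : x - 1 - η ν ≠ 0 := fun h => hne (by linear_combination h)
      field_simp
      ring
    have hρc : Tendsto (fun x : ℂ => ρ (x - 1)) (𝓝[≠] (η ν + 1)) (𝓝 (ρ (η ν))) :=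
      hρa.continuousAt.tendsto.comp (tmap_m.mono_right nhdsWithin_le_nhds)
    have := (tendsto_const_nhds.add (hzero_p.mul hρc)).congr' hE
    simpa using this
  have hψp2 : Tendsto (fun x : ℂ => ψ (x + 1) ν) (𝓝[≠] (η ν + 1)) (𝓝 (ψ (η ν + 2) ν)) :=
    ((hψreg ν _ hDp2 hne_p2).continuousAt.tendsto).comp tpp
  have hcν1p : Tendsto (fun x : ℂ => τ x (ν + 1)) (𝓝[≠] (η ν + 1)) (𝓝 (τ (η ν + 1) (ν + 1))) :=
    ((hcont (ν + 1) _ hDp1).tendsto).mono_left nhdsWithin_le_nhds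
  have hcνm1p : Tendsto (fun x : ℂ => τ x (ν - 1)) (𝓝[≠] (η ν + 1)) (𝓝 (τ (η ν + 1) (ν - 1))) :=
    ((hcont (ν - 1) _ hDp1).tendsto).mono_left nhdsWithin_le_nhds
  have hψm1p : Tendsto (fun x : ℂ => ψ x (ν - 1)) (𝓝[≠] (η ν + 1)) (𝓝 (ψ (η ν + 1) (ν - 1))) :=
    ((hψreg (ν - 1) _ hDp1 hjp).continuousAt.tendsto).mono_left nhdsWithin_le_nhds
  have hcτp2 : Tendsto (fun x : ℂ => τ (x + 1) ν) (𝓝[≠] (η ν + 1)) (𝓝 (τ (η ν + 2) ν)) :=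
    ((hcont ν _ hDp2).tendsto).comp tpp
  have hB : Tendsto (fun x => (x - (η ν + 1)) * ψ (x - 1) ν) (𝓝[≠] (η ν + 1))
      (𝓝 (0 * ψ (η ν + 2) ν + (deriv (fun x => τ x ν) (η ν))⁻¹ *
        (τ (η ν + 1) (ν + 1) * τ (η ν + 1) (ν - 1) * ψ (η ν + 1) (ν - 1) / τ (η ν + 2) ν))) := by
    have hE : (fun x : ℂ => (x - (η ν + 1)) * ψ (x + 1) ν +
        ((x - 1 - η ν) / τ (x - 1) ν) *
          (τ x (ν + 1) * τ x (ν - 1) * ψ x (ν - 1) / τ (x + 1) ν)) =ᶠ[𝓝[≠] (η ν + 1)]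
        (fun x => (x - (η ν + 1)) * ψ (x - 1) ν) := by
      filter_upwards [hEq1] with x hx
      rw [hx]; ring
    exact ((hzero_p.mul hψp2).add ((hinv.comp tmap_m).mul
      (((hcν1p.mul hcνm1p).mul hψm1p).div hcτp2 (hnz4 ν)))).congr' hE
  have E1 := tendsto_nhds_unique hA hB
  simp only [zero_mul, zero_add] at E1
  -- Part 2: residue matching at η ν - 1
  have hxne2 : ∀ᶠ x in 𝓝[≠] (η ν - 1), x ≠ η ν - 1 :=
    eventually_mem_nhdsWithin.mono fun x hx => by simpa using hx
  have hEq2 : ∀ᶠ x in 𝓝[≠] (η ν - 1),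
      ψ (x - 1) ν = ψ (x + 1) ν +
        (τ x (ν + 1) * τ x (ν - 1) / (τ (x - 1) ν * τ (x + 1) ν)) * ψ x (ν - 1) := by
    have e1 : ∀ᶠ x in 𝓝[≠] (η ν - 1), x ∈ D :=
      (hD.eventually_mem hDm1).filter_mono nhdsWithin_le_nhds
    have e2 : ∀ᶠ x in 𝓝[≠] (η ν - 1), τ (x - 1) ν ≠ 0 :=
      tmm.eventually ((hcont ν _ hDm2).eventually_ne (hnz5 ν))
    have e3 : ∀ᶠ x in 𝓝[≠] (η ν - 1), τ (x + 1) ν ≠ 0 := tmap_p.eventually hτne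
    have e4 : ∀ᶠ x in 𝓝[≠] (η ν - 1), x - 1 ≠ η ν :=
      tmm.eventually (eventually_ne_nhds hne_m2)
    have e5 : ∀ᶠ x in 𝓝[≠] (η ν - 1), x + 1 ≠ η ν :=
      tmap_p.eventually (eventually_mem_nhdsWithin.mono fun y hy => by simpa using hy)
    have e6 : ∀ᶠ x in 𝓝[≠] (η ν - 1), x ≠ η (ν - 1) :=
      (eventually_ne_nhds hjm).filter_mono nhdsWithin_le_nhds
    filter_upwards [e1, e2, e3, e4, e5, e6] with x h1 h2 h3 h4 h5 h6
    exact heq ν x h1 h2 h3 h4 h5 h6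
  have hzero_m : Tendsto (fun x : ℂ => x - (η ν - 1)) (𝓝[≠] (η ν - 1)) (𝓝 0) := by
    have : Tendsto (fun x : ℂ => x - (η ν - 1)) (𝓝 (η ν - 1)) (𝓝 (η ν - 1 - (η ν - 1))) :=
      (continuous_id.sub continuous_const).tendsto _
    simpa using this.mono_left nhdsWithin_le_nhds
  have hψmm : Tendsto (fun x : ℂ => ψ (x - 1) ν) (𝓝[≠] (η ν - 1)) (𝓝 (ψ (η ν - 2) ν)) :=
    ((hψreg ν _ hDm2 hne_m2).continuousAt.tendsto).comp tmm
  have hA2 : Tendsto (fun x => (x - (η ν - 1)) * ψ (x - 1) ν) (𝓝[≠] (η ν - 1)) (𝓝 0) := by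
    have := hzero_m.mul hψmm
    simpa using this
  have hcν1m : Tendsto (fun x : ℂ => τ x (ν + 1)) (𝓝[≠] (η ν - 1)) (𝓝 (τ (η ν - 1) (ν + 1))) :=
    ((hcont (ν + 1) _ hDm1).tendsto).mono_left nhdsWithin_le_nhds
  have hcνm1m : Tendsto (fun x : ℂ => τ x (ν - 1)) (𝓝[≠] (η ν - 1)) (𝓝 (τ (η ν - 1) (ν - 1))) :=
    ((hcont (ν - 1) _ hDm1).tendsto).mono_left nhdsWithin_le_nhds
  have hψm1m : Tendsto (fun x : ℂ => ψ x (ν - 1)) (𝓝[≠] (η ν - 1)) (𝓝 (ψ (η ν - 1) (ν - 1))) :=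
    ((hψreg (ν - 1) _ hDm1 hjm).continuousAt.tendsto).mono_left nhdsWithin_le_nhds
  have hcτm2 : Tendsto (fun x : ℂ => τ (x - 1) ν) (𝓝[≠] (η ν - 1)) (𝓝 (τ (η ν - 2) ν)) :=
    ((hcont ν _ hDm2).tendsto).comp tmm
  have hρc2 : Tendsto (fun x : ℂ => ρ (x + 1)) (𝓝[≠] (η ν - 1)) (𝓝 (ρ (η ν))) :=
    hρa.continuousAt.tendsto.comp (tmap_p.mono_right nhdsWithin_le_nhds)
  have hB2 : Tendsto (fun x => (x - (η ν - 1)) * ψ (x - 1) ν) (𝓝[≠] (η ν - 1))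
      (𝓝 ((α ν + 0 * ρ (η ν)) + (deriv (fun x => τ x ν) (η ν))⁻¹ *
        (τ (η ν - 1) (ν + 1) * τ (η ν - 1) (ν - 1) * ψ (η ν - 1) (ν - 1) / τ (η ν - 2) ν))) := by
    have hE : (fun x : ℂ => (α ν + (x - (η ν - 1)) * ρ (x + 1)) +
        ((x + 1 - η ν) / τ (x + 1) ν) *
          (τ x (ν + 1) * τ x (ν - 1) * ψ x (ν - 1) / τ (x - 1) ν)) =ᶠ[𝓝[≠] (η ν - 1)]
        (fun x => (x - (η ν - 1)) * ψ (x - 1) ν) := by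
      filter_upwards [hEq2, tmap_p.eventually hρe, hxne2] with x hx hψx hne
      rw [hx, hψx]
      have h0 : x + 1 - η ν ≠ 0 := fun h => hne (by linear_combination h)
      field_simp
      ring
    exact ((tendsto_const_nhds.add (hzero_m.mul hρc2)).add ((hinv.comp tmap_p).mul
      (((hcν1m.mul hcνm1m).mul hψm1m).div hcτm2 (hnz5 ν)))).congr' hE
  have E2 := tendsto_nhds_unique hA2 hB2
  simp only [zero_mul, add_zero] at E2
  -- Part 3: ψ (η ν - 1) (ν - 1) = ψ (η ν + 1) (ν - 1)
  have E3 : ψ (η ν - 1) (ν - 1) = ψ (η ν + 1) (ν - 1) := by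
    by_cases hc : η ν = η (ν - 2)
    · -- degenerate case: limit argument at η ν
      obtain ⟨ρ₂, hρ₂a, hρ₂e⟩ := hψpole (ν - 2)
      rw [← hc] at hρ₂a hρ₂e
      have hxne3 : ∀ᶠ x in 𝓝[≠] (η ν), x ≠ η ν :=
        eventually_mem_nhdsWithin.mono fun x hx => by simpa using hx
      have hEq3 : ∀ᶠ x in 𝓝[≠] (η ν),
          ψ (x - 1) (ν - 1) = ψ (x + 1) (ν - 1) +
            (τ x ν * τ x (ν - 2) / (τ (x - 1) (ν - 1) * τ (x + 1) (ν - 1))) * ψ x (ν - 2) := by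
        have e1 : ∀ᶠ x in 𝓝[≠] (η ν), x ∈ D :=
          (hD.eventually_mem hD0).filter_mono nhdsWithin_le_nhds
        have e2 : ∀ᶠ x in 𝓝[≠] (η ν), τ (x - 1) (ν - 1) ≠ 0 :=
          tm3.eventually ((hcont (ν - 1) _ hDm1).eventually_ne hS3)
        have e3 : ∀ᶠ x in 𝓝[≠] (η ν), τ (x + 1) (ν - 1) ≠ 0 :=
          tp3.eventually ((hcont (ν - 1) _ hDp1).eventually_ne hT3)
        have e4 : ∀ᶠ x in 𝓝[≠] (η ν), x - 1 ≠ η (ν - 1) :=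
          tm3.eventually (eventually_ne_nhds hjm)
        have e5 : ∀ᶠ x in 𝓝[≠] (η ν), x + 1 ≠ η (ν - 1) :=
          tp3.eventually (eventually_ne_nhds hjp)
        have e6 : ∀ᶠ x in 𝓝[≠] (η ν), x ≠ η (ν - 1 - 1) := by
          filter_upwards [hxne3] with x hx
          rw [show ν - 1 - 1 = ν - 2 by ring, ← hc]
          exact hx
        filter_upwards [e1, e2, e3, e4, e5, e6] with x h1 h2 h3 h4 h5 h6
        have h := heq (ν - 1) x h1 h2 h3 h4 h5 h6
        rw [show ν - 1 + 1 = ν by ring, show ν - 1 - 1 = ν - 2 by ring] at h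
        exact h
      have hLHS : Tendsto (fun x : ℂ => ψ (x - 1) (ν - 1)) (𝓝[≠] (η ν))
          (𝓝 (ψ (η ν - 1) (ν - 1))) :=
        ((hψreg (ν - 1) _ hDm1 hjm).continuousAt.tendsto).comp tm3
      have hψp3 : Tendsto (fun x : ℂ => ψ (x + 1) (ν - 1)) (𝓝[≠] (η ν))
          (𝓝 (ψ (η ν + 1) (ν - 1))) :=
        ((hψreg (ν - 1) _ hDp1 hjp).continuousAt.tendsto).comp tp3
      have hzero3 : Tendsto (fun x : ℂ => x - η ν) (𝓝[≠] (η ν)) (𝓝 0) := by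
        have : Tendsto (fun x : ℂ => x - η ν) (𝓝 (η ν)) (𝓝 (η ν - η ν)) :=
          (continuous_id.sub continuous_const).tendsto _
        simpa using this.mono_left nhdsWithin_le_nhds
      have hτν2 : τ (η ν) (ν - 2) = 0 := by rw [hc]; exact hτη (ν - 2)
      have hcτν2 : Tendsto (fun x : ℂ => τ x (ν - 2)) (𝓝[≠] (η ν)) (𝓝 (τ (η ν) (ν - 2))) :=
        ((hcont (ν - 2) _ hD0).tendsto).mono_left nhdsWithin_le_nhds
      have hρ₂c : Tendsto (fun x : ℂ => ρ₂ x) (𝓝[≠] (η ν)) (𝓝 (ρ₂ (η ν))) :=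
        hρ₂a.continuousAt.tendsto.mono_left nhdsWithin_le_nhds
      have hcd1 : Tendsto (fun x : ℂ => τ (x - 1) (ν - 1)) (𝓝[≠] (η ν))
          (𝓝 (τ (η ν - 1) (ν - 1))) := ((hcont (ν - 1) _ hDm1).tendsto).comp tm3
      have hcd2 : Tendsto (fun x : ℂ => τ (x + 1) (ν - 1)) (𝓝[≠] (η ν))
          (𝓝 (τ (η ν + 1) (ν - 1))) := ((hcont (ν - 1) _ hDp1).tendsto).comp tp3
      have hterm : Tendsto (fun x : ℂ =>
          (τ x ν * τ x (ν - 2) / (τ (x - 1) (ν - 1) * τ (x + 1) (ν - 1))) * ψ x (ν - 2))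
          (𝓝[≠] (η ν)) (𝓝 0) := by
        have hE : (fun x : ℂ => (τ x ν / (x - η ν)) * τ x (ν - 2) *
            ((α (ν - 2) + (x - η ν) * ρ₂ x) / (τ (x - 1) (ν - 1) * τ (x + 1) (ν - 1))))
            =ᶠ[𝓝[≠] (η ν)] (fun x =>
            (τ x ν * τ x (ν - 2) / (τ (x - 1) (ν - 1) * τ (x + 1) (ν - 1))) * ψ x (ν - 2)) := by
          filter_upwards [hρ₂e, hxne3] with x hψx hne
          rw [hψx]
          have h0 : x - η ν ≠ 0 := sub_ne_zero.mpr hne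
          field_simp
        have hnum : Tendsto (fun x : ℂ => α (ν - 2) + (x - η ν) * ρ₂ x) (𝓝[≠] (η ν))
            (𝓝 (α (ν - 2) + 0 * ρ₂ (η ν))) := tendsto_const_nhds.add (hzero3.mul hρ₂c)
        have := ((hslope.mul hcτν2).mul (hnum.div (hcd1.mul hcd2)
          (mul_ne_zero hS3 hT3))).congr' hE
        simpa [hτν2] using this
      have hEE : (fun x : ℂ => ψ (x + 1) (ν - 1) +
          (τ x ν * τ x (ν - 2) / (τ (x - 1) (ν - 1) * τ (x + 1) (ν - 1))) * ψ x (ν - 2))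
          =ᶠ[𝓝[≠] (η ν)] (fun x => ψ (x - 1) (ν - 1)) := by
        filter_upwards [hEq3] with x hx; exact hx.symm
      have hRHS := (hψp3.add hterm).congr' hEE
      have := tendsto_nhds_unique hLHS hRHS
      simpa using this
    · -- generic case: evaluate the equation at x = η ν directly
      have h6 : η ν ≠ η (ν - 1 - 1) := by
        rw [show ν - 1 - 1 = ν - 2 by ring]; exact hc
      have h := heq (ν - 1) (η ν) hD0 hS3 hT3 hjm hjp h6
      rw [show ν - 1 + 1 = ν by ring] at h
      rw [hτη ν] at h
      simpa using h
  -- Final algebra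
  rw [E3] at E2
  have hw : ψ (η ν + 1) (ν - 1) ≠ 0 := by
    intro h0
    rw [h0] at E1
    simp at E1
    exact hα ν E1
  rw [E1] at E2
  have key : (τ (η ν + 1) (ν + 1) * τ (η ν - 2) ν * τ (η ν + 1) (ν - 1) +
      τ (η ν - 1) (ν + 1) * τ (η ν + 2) ν * τ (η ν - 1) (ν - 1)) * ψ (η ν + 1) (ν - 1) *
      deriv (fun x => τ x ν) (η ν) = 0 := by
    field_simp [hd0, hnz4 ν, hnz5 ν] at E2
    linear_combination -(deriv (fun x => τ x ν) (η ν)) * E2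
  rcases mul_eq_zero.mp key with h | h
  · rcases mul_eq_zero.mp h with h' | h'
    · exact h'
    · exact absurd h' hw
  · exact absurd h hd0
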